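/- Let A be a twice differentiable function of z with A' < 0 such that A'' - A'² < 0, and suppose W(φ_B) = 2(d-1)e^{-A}A' and φ_B' = √(-2(d-1)(A'' - A'²)). Then W ∂²_φ log W = -(1/2) e^{-A} ∂_z log(1 - A''/A'²). -/

import Mathlib

theorem W_ddphi_logW_identity (d : ℕ) (hd : 2 ≤ d)
    (A φB W : ℝ → ℝ)
    (hA : ContDiff ℝ 3 A)
    (hA' : ∀ z, deriv A z < 0)
    (hstrict : ∀ z, deriv (deriv A) z - (deriv A z) ^ 2 < 0)
    (hφB' : ∀ z, deriv φB z =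
      Real.sqrt (-2 * ((d : ℝ) - 1) * (deriv (deriv A) z - (deriv A z) ^ 2)))
    (hW : ∀ z, W z = 2 * ((d : ℝ) - 1) * Real.exp (-(A z)) * deriv A z) :
    ∀ z, W z *
        (deriv (fun t => deriv W t / (W t * deriv φB t)) z / deriv φB z) =
      -(1 / 2) * Real.exp (-(A z)) *
        deriv (fun t => Real.log (1 - deriv (deriv A) t / (deriv A t) ^ 2)) z := by
  -- basic constants
  set c : ℝ := 2 * ((d : ℝ) - 1) with hc
  have hd1 : (2:ℝ) ≤ (d:ℝ) := by exact_mod_cast hd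
  have hcpos : 0 < c := by rw [hc]; linarith
  -- differentiability of A and its derivatives
  have h3 : ContDiff ℝ ((2:ℕ) + 1) A := by exact_mod_cast hA
  obtain ⟨hA1, -, hA2⟩ := contDiff_succ_iff_deriv.mp h3
  have h2 : ContDiff ℝ ((1:ℕ) + 1) (deriv A) := by exact_mod_cast hA2
  obtain ⟨hAd1, -, hAd2'⟩ := contDiff_succ_iff_deriv.mp h2
  have hAd2 : Differentiable ℝ (deriv (deriv A)) :=
    hAd2'.differentiable (by norm_num)
  -- hasDerivAt facts
  have hDA : ∀ t, HasDerivAt A (deriv A t) t := fun t => (hA1 t).hasDerivAt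
  have hDa : ∀ t, HasDerivAt (deriv A) (deriv (deriv A) t) t :=
    fun t => (hAd1 t).hasDerivAt
  have hDb : ∀ t, HasDerivAt (deriv (deriv A)) (deriv (deriv (deriv A)) t) t :=
    fun t => (hAd2 t).hasDerivAt
  -- u
  set u : ℝ → ℝ := fun t => (deriv A t) ^ 2 - deriv (deriv A) t with hu_def
  have hu : ∀ t, 0 < u t := fun t => by have := hstrict t; simp only [hu_def]; linarith
  have hDu : ∀ t, HasDerivAt u
      (2 * deriv A t ^ 1 * deriv (deriv A) t - deriv (deriv (deriv A)) t) t :=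
    fun t => ((hDa t).pow 2).sub (hDb t)
  -- sqrt facts
  have hsu : ∀ t, Real.sqrt (u t) * Real.sqrt (u t) = u t :=
    fun t => Real.mul_self_sqrt (hu t).le
  have hsc : Real.sqrt c * Real.sqrt c = c := Real.mul_self_sqrt hcpos.le
  have hsune : ∀ t, Real.sqrt (u t) ≠ 0 := fun t => (Real.sqrt_pos.mpr (hu t)).ne'
  have hscne : Real.sqrt c ≠ 0 := (Real.sqrt_pos.mpr hcpos).ne'
  have hane : ∀ t, deriv A t ≠ 0 := fun t => (hA' t).ne
  have hEne : ∀ t, Real.exp (-(A t)) ≠ 0 := fun t => (Real.exp_pos _).ne'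
  -- φB'
  have hφ : ∀ t, deriv φB t = Real.sqrt c * Real.sqrt (u t) := by
    intro t
    rw [hφB' t, ← Real.sqrt_mul hcpos.le]
    congr 1
    rw [hu_def, hc]; ring
  -- W as a function
  have hWfun : W = fun t => c * Real.exp (-(A t)) * deriv A t := funext fun t => hW t
  subst hWfun
  -- deriv of W
  have hDW : ∀ t, deriv (fun t => c * Real.exp (-(A t)) * deriv A t) t
      = -(c * Real.exp (-(A t)) * u t) := by
    intro t
    have h1 : HasDerivAt (fun t => c * Real.exp (-(A t)) * deriv A t)
        ((c * (Real.exp (-(A t)) * -(deriv A t))) * deriv A t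
          + (c * Real.exp (-(A t))) * deriv (deriv A) t) t :=
      ((((hDA t).neg).exp.const_mul c).mul (hDa t))
    rw [h1.deriv, hu_def]; ring
  -- the inner function equals a clean expression
  have hfun : (fun t => deriv (fun t => c * Real.exp (-(A t)) * deriv A t) t /
        (c * Real.exp (-(A t)) * deriv A t * deriv φB t))
      = fun t => -Real.sqrt (u t) / (Real.sqrt c * deriv A t) := by
    funext t
    rw [hDW t, hφ t]
    rw [div_eq_div_iff (by
        intro h
        rcases mul_eq_zero.mp h with h | h
        · rcases mul_eq_zero.mp h with h | h
          · rcases mul_eq_zero.mp h with h | h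
            · exact hcpos.ne' h
            · exact hEne t h
          · exact hane t h
        · rcases mul_eq_zero.mp h with h | h
          · exact hscne h
          · exact hsune t h)
      (by exact mul_ne_zero hscne (hane t))]
    linear_combination (c * Real.exp (-(A t)) * Real.sqrt c * deriv A t) * hsu t
  intro z
  rw [hW z]
  rw [hfun]
  -- derivative of the clean expression
  have hDnum : HasDerivAt (fun t => -Real.sqrt (u t))
      (-((1 / (2 * Real.sqrt (u z))) *
        (2 * deriv A z ^ 1 * deriv (deriv A) z - deriv (deriv (deriv A)) z))) z :=
    (((Real.hasDerivAt_sqrt (hu z).ne').comp z (hDu z))).neg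
  have hDden : HasDerivAt (fun t => Real.sqrt c * deriv A t)
      (Real.sqrt c * deriv (deriv A) z) z := (hDa z).const_mul _
  have hdenne : Real.sqrt c * deriv A z ≠ 0 := mul_ne_zero hscne (hane z)
  have hDg := (hDnum.div hDden hdenne).deriv
  simp only [Pi.div_def] at hDg
  rw [hDg, hφ z]
  -- derivative of the log term
  have hrpos : (0:ℝ) < 1 - deriv (deriv A) z / (deriv A z) ^ 2 := by
    have h2 : (0:ℝ) < (deriv A z) ^ 2 :=
      lt_of_le_of_ne (sq_nonneg _) (Ne.symm (pow_ne_zero 2 (hane z)))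
    rw [sub_pos, div_lt_one h2]
    have := hstrict z; linarith
  have hDr : HasDerivAt (fun t => 1 - deriv (deriv A) t / (deriv A t) ^ 2)
      (0 - (deriv (deriv (deriv A)) z * (deriv A z) ^ 2 -
        deriv (deriv A) z * (2 * deriv A z ^ 1 * deriv (deriv A) z)) /
        ((deriv A z) ^ 2) ^ 2) z :=
    (hasDerivAt_const z (1:ℝ)).sub ((hDb z).div ((hDa z).pow 2) (pow_ne_zero 2 (hane z)))
  have hDlog := (hDr.log hrpos.ne').deriv
  rw [hDlog]
  -- final algebra
  have hsuz := hsu z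
  have huz := hu z
  have haz := hA' z
  have hEz := Real.exp_pos (-(A z))
  set a := deriv A z
  set b := deriv (deriv A) z
  set e := deriv (deriv (deriv A)) z
  set s := Real.sqrt (u z)
  set sc := Real.sqrt c
  have huzab : u z = a ^ 2 - b := rfl
  rw [huzab] at hsuz huz
  rw [← hsc]
  have hsne : s ≠ 0 := hsune z
  have hrne := hrpos.ne'
  have hane' : a ≠ 0 := hane z
  have hEne' : Real.exp (-(A z)) ≠ 0 := hEne z
  field_simp
  linear_combination (2 * a ^ 2 * b - a * e) * hsuz
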